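/- A partial order P is a linear-interval order if and only if P has a linear extension fulfilling the 2+2 rule. -/

import Mathlib

variable {V : Type*}

/-- A strict partial order: irreflexive and transitive. -/
def IsPartialOrd (P : V → V → Prop) : Prop := Irreflexive P ∧ Transitive P

/-- A strict linear order: irreflexive, transitive, and total. -/
def IsLinearOrd (L : V → V → Prop) : Prop :=
  Irreflexive L ∧ Transitive L ∧ ∀ u v : V, u ≠ v → L u v ∨ L v u

/-- `L` is a linear extension of `P`. -/
def IsLinExt (P L : V → V → Prop) : Prop :=
  IsLinearOrd L ∧ ∀ u v : V, P u v → L u v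

/-- Four distinct elements `a0, b0, a1, b1` form a suborder `2+2` of `P`:
their only `P`-relations are `a0 ≺ b0` and `a1 ≺ b1`. -/
def IsTwoPlusTwo (P : V → V → Prop) (a0 b0 a1 b1 : V) : Prop :=
  ([a0, b0, a1, b1] : List V).Nodup ∧ P a0 b0 ∧ P a1 b1 ∧
  ¬ P b0 a0 ∧ ¬ P b1 a1 ∧
  ¬ P a0 a1 ∧ ¬ P a1 a0 ∧ ¬ P a0 b1 ∧ ¬ P b1 a0 ∧
  ¬ P a1 b0 ∧ ¬ P b0 a1 ∧ ¬ P b0 b1 ∧ ¬ P b1 b0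

/-- The linear extension `L` of `P` fulfills the `2+2` rule. -/
def TwoPlusTwoRule (P L : V → V → Prop) : Prop :=
  ∀ a0 b0 a1 b1 : V, IsTwoPlusTwo P a0 b0 a1 b1 → L b0 a1 ∨ L b1 a0

/-- Four distinct elements form an alternating 4-anticycle of `L` w.r.t. `P`. -/
def IsAlt4Anticycle (P L : V → V → Prop) (a0 b0 a1 b1 : V) : Prop :=
  ([a0, b0, a1, b1] : List V).Nodup ∧ P a0 b0 ∧ P a1 b1 ∧
  L a1 b0 ∧ ¬ P a1 b0 ∧ L a0 b1 ∧ ¬ P a0 b1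

/-- An alternating `2k`-anticycle of `L` w.r.t. `P`, given by `a, b : ZMod k → V`. -/
def IsAltAnticycle (P L : V → V → Prop) (k : ℕ) (a b : ZMod k → V) : Prop :=
  Function.Injective a ∧ Function.Injective b ∧ (∀ i j : ZMod k, a i ≠ b j) ∧
  ∀ i : ZMod k, P (a i) (b i) ∧ L (a (i + 1)) (b i) ∧ ¬ P (a (i + 1)) (b i)

/-- `P` is a linear-interval order: the intersection of a linear order and an
interval order (given by an interval representation `l`, `r`). -/
def IsLinearIntervalOrder (P : V → V → Prop) : Prop :=
  ∃ (L : V → V → Prop) (l r : V → ℝ), IsLinearOrd L ∧ (∀ v, l v ≤ r v) ∧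
    ∀ u v : V, P u v ↔ L u v ∧ r u < l v

section AuxLIO

variable (P L : V → V → Prop)

/-- Weak constraint: `l x ≤ r y`. -/
def Wrel (x y : V) : Prop := y = x ∨ (L y x ∧ ¬ P y x)

/-- `r u < r w` forced. -/
def StepR (u w : V) : Prop := ∃ v, P u v ∧ Wrel P L v w

/-- An alternating bad cycle of period `k`. -/
def BadCyc (k : ℕ) (a b : ℕ → V) : Prop :=
  (∀ i, a (i + k) = a i) ∧ (∀ i, b (i + k) = b i) ∧
    ∀ i, P (a i) (b i) ∧ Wrel P L (b i) (a (i + 1))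

variable {P L}

lemma badcyc_rotate {k : ℕ} {a b : ℕ → V} (h : BadCyc P L k a b) (s : ℕ) :
    BadCyc P L k (fun i => a (i + s)) (fun i => b (i + s)) := by
  obtain ⟨ha, hb, hc⟩ := h
  refine ⟨fun i => ?_, fun i => ?_, fun i => ?_⟩
  · show a (i + k + s) = a (i + s)
    rw [add_right_comm]; exact ha (i + s)
  · show b (i + k + s) = b (i + s)
    rw [add_right_comm]; exact hb (i + s)
  · refine ⟨(hc (i + s)).1, ?_⟩
    have := (hc (i + s)).2
    show Wrel P L (b (i + s)) (a (i + 1 + s))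
    rw [add_right_comm]
    exact this

lemma badcyc_shorten {k : ℕ} {a b : ℕ → V} (hk : 2 ≤ k) (h : BadCyc P L k a b)
    (h0 : P (a 0) (b 1)) :
    BadCyc P L (k - 1)
      (fun i => if i % (k - 1) = 0 then a 0 else a (i % (k - 1) + 1))
      (fun i => b (i % (k - 1) + 1)) := by
  obtain ⟨ha, hb, hc⟩ := h
  set m := k - 1 with hm
  have hm0 : 0 < m := by omega
  have hmod : ∀ i : ℕ, (i + m) % m = i % m := fun i => Nat.add_mod_right i m
  refine ⟨fun i => by simp [hmod], fun i => by simp [hmod], fun i => ?_⟩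
  have hj : i % m < m := Nat.mod_lt _ hm0
  have hsucc : (i + 1) % m = (i % m + 1) % m :=
    (((Nat.mod_modEq i m).add_right 1)).symm
  have hak : a k = a 0 := by have := ha 0; simpa using this
  constructor
  · -- P part
    by_cases h' : i % m = 0
    · simp only [h']
      simpa [h'] using h0
    · simp only [h', if_neg h']
      exact (hc (i % m + 1)).1
  · -- W part
    simp only []
    rcases Nat.lt_or_ge (i % m + 1) m with hlt | hge
    · have h1 : (i + 1) % m = i % m + 1 := by
        rw [hsucc]; exact Nat.mod_eq_of_lt hlt
      rw [h1]
      simp only [Nat.succ_ne_zero, if_neg (Nat.succ_ne_zero _)]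
      exact (hc (i % m + 1)).2
    · have heq : i % m + 1 = m := by omega
      have h1 : (i + 1) % m = 0 := by rw [hsucc, heq, Nat.mod_self]
      rw [h1]
      simp only [if_pos rfl]
      have := (hc (i % m + 1)).2
      rw [heq] at this ⊢
      have hmk : m + 1 = k := by omega
      rw [hmk] at this
      rw [← hak]
      exact this

lemma step_alt (hP : IsPartialOrd P) (hL : IsLinearOrd L)
    (hExt : ∀ u v, P u v → L u v) (hRule : TwoPlusTwoRule P L)
    {x0 y0 x1 y1 : V} (h0 : P x0 y0) (h1 : P x1 y1) (hw : Wrel P L y0 x1) :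
    P x0 y1 ∨ (L x1 y0 ∧ L y1 x0) := by
  obtain ⟨hPi, hPt⟩ := hP
  obtain ⟨hLi, hLt, hLtot⟩ := hL
  have hPasym : ∀ u v, P u v → ¬ P v u := fun u v h h' => hPi u (hPt h h')
  have hLasym : ∀ u v, L u v → ¬ L v u := fun u v h h' => hLi u (hLt h h')
  have hPne : ∀ u v, P u v → u ≠ v := fun u v h he => hPi u (he ▸ h)
  rcases hw with he | ⟨hL10, hnP10⟩
  · left; exact hPt (he ▸ h0) h1
  · by_cases hx : P x0 y1
    · exact Or.inl hx
    · right
      -- build 2+2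
      have ne1 : x0 ≠ y0 := hPne _ _ h0
      have ne2 : x0 ≠ x1 := fun he => hnP10 (he ▸ h0)
      have ne3 : x0 ≠ y1 := fun he => hnP10 (hPt (he ▸ h1) h0)
      have ne4 : y0 ≠ x1 := fun he => hLi y0 (he ▸ hL10)
      have ne5 : y0 ≠ y1 := fun he => hnP10 (he ▸ h1)
      have ne6 : x1 ≠ y1 := hPne _ _ h1
      have hnodup : ([x0, y0, x1, y1] : List V).Nodup := by
        simp only [List.nodup_cons, List.mem_cons, List.mem_singleton,
          List.not_mem_nil, or_false, List.nodup_nil, and_true]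
        push_neg
        exact ⟨⟨ne1, ne2, ne3⟩, ⟨ne4, ne5⟩, ne6, trivial⟩
      have h22 : IsTwoPlusTwo P x0 y0 x1 y1 := by
        refine ⟨hnodup, h0, h1, hPasym _ _ h0, hPasym _ _ h1, ?_, ?_, hx, ?_, ?_, ?_, ?_, ?_⟩
        · exact fun hp => hx (hPt hp h1)
        · exact fun hp => hnP10 (hPt hp h0)
        · exact fun hp => hnP10 (hPt (hPt h1 hp) h0)
        · exact hnP10
        · exact fun hp => hLasym _ _ hL10 (hExt _ _ hp)
        · exact fun hp => hx (hPt h0 hp)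
        · exact fun hp => hnP10 (hPt h1 hp)
      rcases hRule _ _ _ _ h22 with hr | hr
      · exact absurd hr (hLasym _ _ hL10)
      · exact ⟨hL10, hr⟩

lemma no_badcyc (hP : IsPartialOrd P) (hL : IsLinearOrd L)
    (hExt : ∀ u v, P u v → L u v) (hRule : TwoPlusTwoRule P L) :
    ∀ k, 0 < k → ∀ a b : ℕ → V, ¬ BadCyc P L k a b := by
  have hPi := hP.1
  have hPt := hP.2
  have hLi := hL.1
  have hLt := hL.2.1
  intro k
  induction k using Nat.strong_induction_on with
  | _ k ih =>
    intro hk a b hbad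
    have ha := hbad.1
    have hb := hbad.2.1
    have hc := hbad.2.2
    have hak : a k = a 0 := by simpa using ha 0
    rcases eq_or_lt_of_le (show 1 ≤ k from hk) with h1 | h2
    · -- k = 1
      have hk1 : k = 1 := h1.symm
      subst hk1
      have h10 : a 1 = a 0 := by simpa using ha 0
      rcases (hc 0).2 with he | ⟨_, hnp⟩
      · have hb0 : b 0 = a 0 := he.symm.trans h10
        have hp := (hc 0).1
        rw [hb0] at hp
        exact hPi _ hp
      · rw [h10] at hnp
        exact hnp (hc 0).1
    · -- k ≥ 2
      by_cases hex : ∃ i, P (a i) (b (i + 1))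
      · obtain ⟨i, hi⟩ := hex
        have hrot := badcyc_rotate hbad i
        have h0 : P ((fun j => a (j + i)) 0) ((fun j => b (j + i)) 1) := by
          simpa [Nat.add_comm] using hi
        have hshort := badcyc_shorten (by omega) hrot h0
        exact ih (k - 1) (by omega) (by omega) _ _ hshort
      · push_neg at hex
        have hgen : ∀ i, L (a (i + 1)) (b i) := by
          intro i
          rcases (hc i).2 with he | ⟨hl, _⟩
          · exact absurd (hPt (he ▸ (hc i).1) (hc (i + 1)).1) (hex i)
          · exact hl
        have hba : ∀ i, L (b (i + 1)) (a i) := by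
          intro i
          rcases step_alt hP hL hExt hRule (hc i).1 (hc (i + 1)).1 (hc i).2 with
            hcase | ⟨_, hr⟩
          · exact absurd hcase (hex i)
          · exact hr
        have hAA : ∀ i, L (a (i + 2)) (a i) := fun i => hLt (hgen (i + 1)) (hba i)
        have hchain : ∀ m, L (a (2 * m + 2)) (a 0) := by
          intro m
          induction m with
          | zero => simpa using hAA 0
          | succ n ihn =>
            have he : 2 * (n + 1) + 2 = (2 * n + 2) + 2 := by ring
            rw [he]
            exact hLt (hAA (2 * n + 2)) ihn
        have h2k := hchain (k - 1)
        have he : 2 * (k - 1) + 2 = k + k := by omega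
        rw [he, ha k, hak] at h2k
        exact hLi _ h2k

lemma chain_of_transGen {u w : V} (h : Relation.TransGen (StepR P L) u w) :
    ∃ k, 0 < k ∧ ∃ a b : ℕ → V, a 0 = u ∧ a k = w ∧
      ∀ i < k, P (a i) (b i) ∧ Wrel P L (b i) (a (i + 1)) := by
  induction h with
  | single h =>
    rename_i w'
    obtain ⟨v, hp, hw⟩ := h
    refine ⟨1, one_pos, fun i => if i = 0 then u else w', fun _ => v, by simp, by simp, ?_⟩
    intro i hi
    interval_cases i
    simp [hp, hw]
  | tail h1 h2 ih =>
    rename_i w' c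
    obtain ⟨k, hk, a, b, ha0, hak, hch⟩ := ih
    obtain ⟨v, hp, hw⟩ := h2
    refine ⟨k + 1, by omega, fun i => if i = k + 1 then c else a i,
      fun i => if i = k then v else b i, by simp [ha0], by simp, ?_⟩
    intro i hi
    rcases Nat.lt_or_ge i k with hik | hik
    · have h1 : i ≠ k + 1 := by omega
      have h2 : i + 1 ≠ k + 1 := by omega
      have h3 : i ≠ k := by omega
      simp only [if_neg h1, if_neg h2, if_neg h3]
      exact hch i hik
    · have hik' : i = k := by omega
      subst hik'
      have h2 : i ≠ i + 1 := by omega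
      simp only [if_neg h2, if_pos rfl]
      rw [hak]
      exact ⟨hp, hw⟩

lemma no_stepR_cycle (hP : IsPartialOrd P) (hL : IsLinearOrd L)
    (hExt : ∀ u v, P u v → L u v) (hRule : TwoPlusTwoRule P L) (u : V) :
    ¬ Relation.TransGen (StepR P L) u u := by
  intro h
  obtain ⟨k, hk, a, b, ha0, hak, hch⟩ := chain_of_transGen h
  apply no_badcyc hP hL hExt hRule k hk (fun i => a (i % k)) (fun i => b (i % k))
  refine ⟨fun i => by simp [Nat.add_mod_right], fun i => by simp [Nat.add_mod_right],
    fun i => ?_⟩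
  have hj : i % k < k := Nat.mod_lt _ hk
  refine ⟨(hch _ hj).1, ?_⟩
  show Wrel P L (b (i % k)) (a ((i + 1) % k))
  have hsucc : (i + 1) % k = (i % k + 1) % k := ((Nat.mod_modEq i k).add_right 1).symm
  rcases Nat.lt_or_ge (i % k + 1) k with hlt | hge
  · have h1 : (i + 1) % k = i % k + 1 := by rw [hsucc]; exact Nat.mod_eq_of_lt hlt
    rw [h1]
    exact (hch _ hj).2
  · have heq : i % k + 1 = k := by omega
    have h1 : (i + 1) % k = 0 := by rw [hsucc, heq, Nat.mod_self]
    rw [h1]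
    have hthis := (hch _ hj).2
    rw [heq, hak, ← ha0] at hthis
    exact hthis

end AuxLIO

theorem stmt5 {V : Type*} [Fintype V] (P : V → V → Prop) (hP : IsPartialOrd P) :
    IsLinearIntervalOrder P ↔
      ∃ L : V → V → Prop, IsLinExt P L ∧ TwoPlusTwoRule P L := by
  constructor
  · rintro ⟨L, l, r, hLo, hlr, hiff⟩
    refine ⟨L, ⟨hLo, fun u v hp => ((hiff u v).1 hp).1⟩, ?_⟩
    intro a0 b0 a1 b1 h22
    obtain ⟨hnd, hp0, hp1, _, _, _, _, hn2, _, hn1, _, _, _⟩ := h22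
    by_contra hcon
    push_neg at hcon
    obtain ⟨hno1, hno2⟩ := hcon
    simp only [List.nodup_cons, List.mem_cons, List.mem_singleton, List.not_mem_nil,
      or_false, List.nodup_nil, and_true] at hnd
    push_neg at hnd
    have hne1 : a1 ≠ b0 := fun he => hnd.2.1.1 he.symm
    have hne2 : a0 ≠ b1 := hnd.1.2.2
    have hL1 : L a1 b0 := (hLo.2.2 _ _ hne1).resolve_right hno1
    have hL2 : L a0 b1 := (hLo.2.2 _ _ hne2).resolve_right hno2
    have hle1 : l b0 ≤ r a1 := by
      by_contra hlt
      push_neg at hlt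
      exact hn1 ((hiff _ _).2 ⟨hL1, hlt⟩)
    have hle2 : l b1 ≤ r a0 := by
      by_contra hlt
      push_neg at hlt
      exact hn2 ((hiff _ _).2 ⟨hL2, hlt⟩)
    have h1 : r a0 < l b0 := ((hiff _ _).1 hp0).2
    have h2 : r a1 < l b1 := ((hiff _ _).1 hp1).2
    linarith
  · rintro ⟨L, ⟨hLo, hExt⟩, hRule⟩
    classical
    have hnocyc := no_stepR_cycle hP hLo hExt hRule
    set r0 : V → ℕ := fun u => {z | Relation.TransGen (StepR P L) z u}.ncard with hr0
    have hstep : ∀ u w, StepR P L u w → r0 u < r0 w := by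
      intro u w h
      refine Set.ncard_lt_ncard ?_ (Set.toFinite _)
      have hsub : {z | Relation.TransGen (StepR P L) z u} ⊆
          {z | Relation.TransGen (StepR P L) z w} := fun z hz => Relation.TransGen.tail hz h
      exact (Set.ssubset_iff_of_subset hsub).mpr ⟨u, Relation.TransGen.single h, hnocyc u⟩
    set l0 : V → ℕ := fun v => sInf {n | ∃ w, Wrel P L v w ∧ r0 w = n} with hl0
    have hl0mem : ∀ v, ∃ w, Wrel P L v w ∧ r0 w = l0 v := by
      intro v
      have hne : {n | ∃ w, Wrel P L v w ∧ r0 w = n}.Nonempty := ⟨r0 v, v, Or.inl rfl, rfl⟩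
      exact Nat.sInf_mem hne
    have hl0le : ∀ v w, Wrel P L v w → l0 v ≤ r0 w := fun v w h => Nat.sInf_le ⟨w, h, rfl⟩
    refine ⟨L, fun v => (l0 v : ℝ), fun u => (r0 u : ℝ), hLo, fun v => ?_, fun u v => ?_⟩
    · show (l0 v : ℝ) ≤ (r0 v : ℝ)
      exact_mod_cast hl0le v v (Or.inl rfl)
    · show P u v ↔ L u v ∧ (r0 u : ℝ) < (l0 v : ℝ)
      constructor
      · intro hp
        refine ⟨hExt _ _ hp, ?_⟩
        obtain ⟨w, hw, hwe⟩ := hl0mem v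
        have hsw := hstep u w ⟨v, hp, hw⟩
        rw [hwe] at hsw
        exact_mod_cast hsw
      · rintro ⟨hl, hr⟩
        by_contra hnp
        have hle : l0 v ≤ r0 u := hl0le v u (Or.inr ⟨hl, hnp⟩)
        exact absurd hr (not_lt.mpr (by exact_mod_cast hle))
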